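/- Let a ∈ (0,1) be a rational number, G = ℤ × ℚ, τ_a(v) = a·v(1) + (1−a)·v(2), G⁺ = {v ∈ G : τ_a(v) > 0} ∪ {0}, and u = (1,1). Then: (i) τ_a is the unique trace on (G,G⁺,u), i.e., every group homomorphism p : G → ℝ with p(G⁺) ⊆ [0,∞) and p(u) = 1 equals τ_a; (ii) the image subgroup I(G,G⁺,u) = ⋂_{τ trace} τ(G) equals ℚ; (iii) the infinitesimal subgroup {v ∈ G : τ(v) = 0 for every trace τ} is nontrivial, i.e., there exists a nonzero v ∈ G with τ_a(v) = 0. -/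

import Mathlib

/-- A trace on `(G, P, u)`: a nonnegative group homomorphism to `ℝ` normalized at `u`. -/
def IsTrace {G : Type*} [AddCommGroup G] (P : Set G) (u : G) (τ : G →+ ℝ) : Prop :=
  (∀ g ∈ P, 0 ≤ τ g) ∧ τ u = 1

/-- The trace `τ_a` as an additive monoid hom. -/
def tauA (a : ℚ) : (ℤ × ℚ) →+ ℝ where
  toFun v := (a : ℝ) * (v.1 : ℝ) + (1 - (a : ℝ)) * (v.2 : ℝ)
  map_zero' := by simp
  map_add' v w := by simp only [Prod.fst_add, Prod.snd_add]; push_cast; ring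

lemma tauA_apply (a : ℚ) (v : ℤ × ℚ) :
    tauA a v = (a : ℝ) * (v.1 : ℝ) + (1 - (a : ℝ)) * (v.2 : ℝ) := rfl

lemma tauA_rat (a : ℚ) (v : ℤ × ℚ) :
    tauA a v = ((a * (v.1 : ℚ) + (1 - a) * v.2 : ℚ) : ℝ) := by
  rw [tauA_apply]; push_cast; ring

lemma uniq (a : ℚ) (ha0 : 0 < a) (ha1 : a < 1) (p : (ℤ × ℚ) →+ ℝ)
    (hp : IsTrace ({v : ℤ × ℚ | 0 < (a : ℝ) * (v.1 : ℝ) + (1 - (a : ℝ)) * (v.2 : ℝ)} ∪ {0})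
      (1, 1) p) (v : ℤ × ℚ) :
    p v = (a : ℝ) * (v.1 : ℝ) + (1 - (a : ℝ)) * (v.2 : ℝ) := by
  obtain ⟨hnn, hu⟩ := hp
  have htr : (a : ℝ) * (v.1 : ℝ) + (1 - (a : ℝ)) * (v.2 : ℝ)
      = ((a * (v.1 : ℚ) + (1 - a) * v.2 : ℚ) : ℝ) := by push_cast; ring
  rw [htr]
  generalize ht : a * (v.1 : ℚ) + (1 - a) * v.2 = t at htr
  -- key positivity: for w with rational τ_a value positive, p w ≥ 0
  have key : ∀ (k m : ℤ), 0 < (k : ℚ) * t - m → (m : ℝ) ≤ (k : ℝ) * p v := by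
    intro k m h
    set w : ℤ × ℚ := k • v - m • (1, 1) with hw
    have hw1 : w.1 = k * v.1 - m := by simp [hw, mul_comm]
    have hw2 : w.2 = (k : ℚ) * v.2 - m := by simp [hw]
    have hmem : w ∈ ({v : ℤ × ℚ | 0 < (a : ℝ) * (v.1 : ℝ) + (1 - (a : ℝ)) * (v.2 : ℝ)}
        ∪ {0} : Set (ℤ × ℚ)) := by
      left
      show 0 < (a : ℝ) * (w.1 : ℝ) + (1 - (a : ℝ)) * (w.2 : ℝ)
      have heq : (a : ℝ) * (w.1 : ℝ) + (1 - (a : ℝ)) * (w.2 : ℝ)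
          = (((k : ℚ) * t - m : ℚ) : ℝ) := by
        rw [hw1, hw2, ← ht]; push_cast; ring
      rw [heq]
      exact_mod_cast h
    have hpw : 0 ≤ p w := hnn w hmem
    have heq2 : p w = (k : ℝ) * p v - (m : ℝ) * 1 := by
      rw [hw, map_sub, map_zsmul, map_zsmul, hu]
      simp [zsmul_eq_mul]
    rw [heq2] at hpw; linarith
  have hle : ∀ r : ℚ, r < t → (r : ℝ) ≤ p v := by
    intro r hr
    have hk : 0 < (r.den : ℚ) := by exact_mod_cast r.pos
    have hkr : (r.den : ℚ) * r = r.num := by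
      rw [mul_comm]; exact_mod_cast Rat.mul_den_eq_num r
    have h : 0 < ((r.den : ℤ) : ℚ) * t - r.num := by
      push_cast
      rw [← hkr]
      nlinarith
    have h2 := key (r.den : ℤ) r.num h
    have hkR : (0 : ℝ) < (r.den : ℝ) := by exact_mod_cast r.pos
    have hrnum : (r.num : ℝ) = (r.den : ℝ) * (r : ℝ) := by
      have h3 : ((r.num : ℚ) : ℝ) = (((r.den : ℚ) * r : ℚ) : ℝ) := by rw [hkr]
      push_cast at h3 ⊢; linarith
    push_cast at h2
    rw [hrnum] at h2
    nlinarith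
  have hge : ∀ r : ℚ, t < r → p v ≤ (r : ℝ) := by
    intro r hr
    have hk : 0 < (r.den : ℚ) := by exact_mod_cast r.pos
    have hkr : (r.den : ℚ) * r = r.num := by
      rw [mul_comm]; exact_mod_cast Rat.mul_den_eq_num r
    have h : 0 < ((-(r.den : ℤ)) : ℚ) * t - (-r.num) := by
      push_cast
      rw [← hkr]
      nlinarith
    have h2 := key (-(r.den : ℤ)) (-r.num) h
    have hrnum : (r.num : ℝ) = (r.den : ℝ) * (r : ℝ) := by
      have h3 : ((r.num : ℚ) : ℝ) = (((r.den : ℚ) * r : ℚ) : ℝ) := by rw [hkr]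
      push_cast at h3 ⊢; linarith
    have hkR : (0 : ℝ) < (r.den : ℝ) := by exact_mod_cast r.pos
    push_cast at h2
    rw [hrnum] at h2
    nlinarith
  refine le_antisymm ?_ ?_
  · by_contra hlt
    push_neg at hlt
    obtain ⟨r, hr1, hr2⟩ := exists_rat_btwn hlt
    have hrr : t < r := by exact_mod_cast hr1
    exact absurd (hge r hrr) (not_le.mpr hr2)
  · by_contra hlt
    push_neg at hlt
    obtain ⟨r, hr1, hr2⟩ := exists_rat_btwn hlt
    have hrr : r < t := by exact_mod_cast hr2
    exact absurd (hle r hrr) (not_le.mpr hr1)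

lemma tauA_isTrace (a : ℚ) :
    IsTrace ({v : ℤ × ℚ | 0 < (a : ℝ) * (v.1 : ℝ) + (1 - (a : ℝ)) * (v.2 : ℝ)} ∪ {0})
      (1, 1) (tauA a) := by
  constructor
  · rintro g (hg | hg)
    · exact le_of_lt hg
    · simp only [Set.mem_singleton_iff] at hg
      simp [hg]
  · show (a : ℝ) * ((1 : ℤ) : ℝ) + (1 - (a : ℝ)) * ((1 : ℚ) : ℝ) = 1
    push_cast; ring

/-- For a rational `a ∈ (0,1)`, `G = ℤ × ℚ`,
`τ_a(v) = a·v₁ + (1−a)·v₂`, `G⁺ = {v : τ_a(v) > 0} ∪ {0}` and `u = (1,1)`: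
(i) `τ_a` is the unique trace on `(G,G⁺,u)`;
(ii) the image subgroup `I(G,G⁺,u) = ⋂_τ τ(G)` equals `ℚ`;
(iii) the infinitesimal subgroup is nontrivial. -/
theorem stmt14 (a : ℚ) (ha0 : 0 < a) (ha1 : a < 1) :
    (∀ p : (ℤ × ℚ) →+ ℝ,
      IsTrace ({v : ℤ × ℚ | 0 < (a : ℝ) * (v.1 : ℝ) + (1 - (a : ℝ)) * (v.2 : ℝ)} ∪ {0})
        (1, 1) p →
      ∀ v : ℤ × ℚ, p v = (a : ℝ) * (v.1 : ℝ) + (1 - (a : ℝ)) * (v.2 : ℝ)) ∧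
    ((⋂ τ ∈ {τ : (ℤ × ℚ) →+ ℝ |
        IsTrace ({v : ℤ × ℚ | 0 < (a : ℝ) * (v.1 : ℝ) + (1 - (a : ℝ)) * (v.2 : ℝ)} ∪ {0})
          (1, 1) τ}, Set.range τ)
      = Set.range ((↑) : ℚ → ℝ)) ∧
    (∃ v : ℤ × ℚ, v ≠ 0 ∧ (a : ℝ) * (v.1 : ℝ) + (1 - (a : ℝ)) * (v.2 : ℝ) = 0) := by
  have ha1' : (1 : ℚ) - a ≠ 0 := by intro h; nlinarith
  have h1 : (1 : ℝ) - (a : ℝ) ≠ 0 := sub_ne_zero.mpr (by exact_mod_cast ha1.ne')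
  refine ⟨uniq a ha0 ha1, ?_, ?_⟩
  · ext x
    simp only [Set.mem_iInter, Set.mem_range, Set.mem_setOf_eq]
    constructor
    · intro hx
      obtain ⟨v, hv⟩ := hx (tauA a) (tauA_isTrace a)
      refine ⟨a * (v.1 : ℚ) + (1 - a) * v.2, ?_⟩
      rw [← hv, tauA_rat]
    · rintro ⟨q, rfl⟩ τ hτ
      refine ⟨(0, q / (1 - a)), ?_⟩
      rw [uniq a ha0 ha1 τ hτ]
      show (a : ℝ) * ((0 : ℤ) : ℝ) + (1 - (a : ℝ)) * ((q / (1 - a) : ℚ) : ℝ) = q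
      push_cast
      field_simp
      ring
  · refine ⟨(1, -a / (1 - a)), ?_, ?_⟩
    · intro h
      have := congrArg Prod.fst h
      simp at this
    · show (a : ℝ) * ((1 : ℤ) : ℝ) + (1 - (a : ℝ)) * ((-a / (1 - a) : ℚ) : ℝ) = 0
      push_cast
      field_simp
      ring
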